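/- Let X₁ and X₂ be real Hausdorff locally convex topological vector spaces, and let Ω₁ ⊆ X₁ and Ω₂ ⊆ X₂ be nonempty compact convex sets. Let f : Ω₁ × Ω₂ → ℝ be a function such that f(·, y) is concave and upper semicontinuous on Ω₁ for every fixed y ∈ Ω₂, and f(x, ·) is convex and lower semicontinuous on Ω₂ for every fixed x ∈ Ω₁. Then the minimax equality max over x ∈ Ω₁ of (min over y ∈ Ω₂ of f(x, y)) = min over y ∈ Ω₂ of (max over x ∈ Ω₁ of f(x, y)) holds with all maxima and minima attained, and moreover f admits a saddle point: there exists (x̄, ȳ) ∈ Ω₁ × Ω₂ such that f(x, ȳ) ≤ f(x̄, ȳ) ≤ f(x̄, y) for all x ∈ Ω₁ and y ∈ Ω₂. -/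

import Mathlib

lemma usc_superlevel_closed {X : Type*} [TopologicalSpace X] {g : X → ℝ} {s : Set X}
    (hs : IsClosed s) (hg : UpperSemicontinuousOn g s) (c : ℝ) :
    IsClosed {x | x ∈ s ∧ c ≤ g x} := by
  refine isClosed_of_closure_subset fun x hx => ?_
  have hxs : x ∈ s := hs.closure_subset (closure_mono (fun z hz => hz.1) hx)
  refine ⟨hxs, ?_⟩
  by_contra hlt
  push_neg at hlt
  have hev : ∀ᶠ x' in nhdsWithin x s, g x' < c := hg x hxs c hlt
  have hne : (nhdsWithin x {x | x ∈ s ∧ c ≤ g x}).NeBot :=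
    mem_closure_iff_nhdsWithin_neBot.1 hx
  have h1 : ∀ᶠ x' in nhdsWithin x {x | x ∈ s ∧ c ≤ g x}, g x' < c :=
    nhdsWithin_mono x (fun z hz => hz.1) hev
  have h2 : ∀ᶠ x' in nhdsWithin x {x | x ∈ s ∧ c ≤ g x}, c ≤ g x' :=
    eventually_nhdsWithin_of_forall (fun z hz => hz.2)
  obtain ⟨z, hz1, hz2⟩ := (h1.and h2).exists
  exact absurd hz2 (not_le.2 hz1)

lemma lsc_sublevel_closed {X : Type*} [TopologicalSpace X] {g : X → ℝ} {s : Set X}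
    (hs : IsClosed s) (hg : LowerSemicontinuousOn g s) (c : ℝ) :
    IsClosed {x | x ∈ s ∧ g x ≤ c} := by
  refine isClosed_of_closure_subset fun x hx => ?_
  have hxs : x ∈ s := hs.closure_subset (closure_mono (fun z hz => hz.1) hx)
  refine ⟨hxs, ?_⟩
  by_contra hlt
  push_neg at hlt
  have hev : ∀ᶠ x' in nhdsWithin x s, c < g x' := hg x hxs c hlt
  have hne : (nhdsWithin x {x | x ∈ s ∧ g x ≤ c}).NeBot :=
    mem_closure_iff_nhdsWithin_neBot.1 hx
  have h1 : ∀ᶠ x' in nhdsWithin x {x | x ∈ s ∧ g x ≤ c}, c < g x' :=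
    nhdsWithin_mono x (fun z hz => hz.1) hev
  have h2 : ∀ᶠ x' in nhdsWithin x {x | x ∈ s ∧ g x ≤ c}, g x' ≤ c :=
    eventually_nhdsWithin_of_forall (fun z hz => hz.2)
  obtain ⟨z, hz1, hz2⟩ := (h1.and h2).exists
  exact absurd hz2 (not_le.2 hz1)

lemma exists_max_of_usc {X : Type*} [TopologicalSpace X] {g : X → ℝ} {K : Set X}
    (hK : IsCompact K) (hKc : IsClosed K) (hne : K.Nonempty)
    (hg : UpperSemicontinuousOn g K) : ∃ x₀ ∈ K, ∀ x ∈ K, g x ≤ g x₀ := by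
  have : Nonempty K := hne.to_subtype
  set t : K → Set X := fun x => {z | z ∈ K ∧ g x.1 ≤ g z} with ht
  have htd : Directed (· ⊇ ·) t := by
    intro x y
    rcases le_total (g x.1) (g y.1) with h | h
    · exact ⟨y, fun z hz => ⟨hz.1, h.trans hz.2⟩, fun z hz => hz⟩
    · exact ⟨x, fun z hz => hz, fun z hz => ⟨hz.1, h.trans hz.2⟩⟩
  have htn : ∀ x : K, (t x).Nonempty := fun x => ⟨x.1, x.2, le_refl _⟩
  have htcl : ∀ x : K, IsClosed (t x) := fun x => usc_superlevel_closed hKc hg _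
  have htc : ∀ x : K, IsCompact (t x) := fun x =>
    hK.of_isClosed_subset (htcl x) (fun z hz => hz.1)
  obtain ⟨x₀, hx₀⟩ :=
    IsCompact.nonempty_iInter_of_directed_nonempty_isCompact_isClosed t htd htn htc htcl
  simp only [Set.mem_iInter] at hx₀
  exact ⟨x₀, (hx₀ ⟨hne.choose, hne.choose_spec⟩).1, fun x hx => (hx₀ ⟨x, hx⟩).2⟩

lemma exists_min_of_lsc {X : Type*} [TopologicalSpace X] {g : X → ℝ} {K : Set X}
    (hK : IsCompact K) (hKc : IsClosed K) (hne : K.Nonempty)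
    (hg : LowerSemicontinuousOn g K) : ∃ x₀ ∈ K, ∀ x ∈ K, g x₀ ≤ g x := by
  have : Nonempty K := hne.to_subtype
  set t : K → Set X := fun x => {z | z ∈ K ∧ g z ≤ g x.1} with ht
  have htd : Directed (· ⊇ ·) t := by
    intro x y
    rcases le_total (g x.1) (g y.1) with h | h
    · exact ⟨x, fun z hz => hz, fun z hz => ⟨hz.1, hz.2.trans h⟩⟩
    · exact ⟨y, fun z hz => ⟨hz.1, hz.2.trans h⟩, fun z hz => hz⟩
  have htn : ∀ x : K, (t x).Nonempty := fun x => ⟨x.1, x.2, le_refl _⟩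
  have htcl : ∀ x : K, IsClosed (t x) := fun x => lsc_sublevel_closed hKc hg _
  have htc : ∀ x : K, IsCompact (t x) := fun x =>
    hK.of_isClosed_subset (htcl x) (fun z hz => hz.1)
  obtain ⟨x₀, hx₀⟩ :=
    IsCompact.nonempty_iInter_of_directed_nonempty_isCompact_isClosed t htd htn htc htcl
  simp only [Set.mem_iInter] at hx₀
  exact ⟨x₀, (hx₀ ⟨hne.choose, hne.choose_spec⟩).1, fun x hx => (hx₀ ⟨x, hx⟩).2⟩


lemma key_finite {X₁ X₂ : Type*} [AddCommGroup X₁] [Module ℝ X₁]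
    [AddCommGroup X₂] [Module ℝ X₂]
    {Ω₁ : Set X₁} {Ω₂ : Set X₂} (hne₁ : Ω₁.Nonempty) (hcv₁ : Convex ℝ Ω₁)
    (hcv₂ : Convex ℝ Ω₂) {f : X₁ → X₂ → ℝ}
    (hconc : ∀ y ∈ Ω₂, ConcaveOn ℝ Ω₁ (fun x => f x y))
    (hconv : ∀ x ∈ Ω₁, ConvexOn ℝ Ω₂ (fun y => f x y))
    {c : ℝ} (u : Finset X₂) (hu : ↑u ⊆ Ω₂)
    (hsup : ∀ z ∈ Ω₂, ∃ x ∈ Ω₁, c < f x z) :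
    ∃ x ∈ Ω₁, ∀ y ∈ u, c ≤ f x y := by
  rcases u.eq_empty_or_nonempty with rfl | hune
  · exact ⟨hne₁.choose, hne₁.choose_spec, by simp⟩
  by_contra hcon
  push_neg at hcon
  set ι := {y // y ∈ u}
  haveI : Nonempty ι := ⟨⟨hune.choose, hune.choose_spec⟩⟩
  haveI : DecidableEq ι := Classical.decEq _
  set S : Set (ι → ℝ) := {v | ∃ x ∈ Ω₁, ∀ i : ι, v i ≤ f x i.1} with hS
  set O : Set (ι → ℝ) := ⋂ i : ι, (fun v : ι → ℝ => v i) ⁻¹' Set.Ioi c with hO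
  have hOmem : ∀ v : ι → ℝ, v ∈ O ↔ ∀ i, c < v i := by
    intro v; simp [hO]
  have hSconv : Convex ℝ S := by
    rintro v ⟨x, hx, hvx⟩ w ⟨x', hx', hwx'⟩ a b ha hb hab
    refine ⟨a • x + b • x', hcv₁ hx hx' ha hb hab, fun i => ?_⟩
    have h := (hconc i.1 (hu i.2)).2 hx hx' ha hb hab
    simp only [smul_eq_mul] at h
    have h1 : a * v i ≤ a * f x i.1 := mul_le_mul_of_nonneg_left (hvx i) ha
    have h2 : b * w i ≤ b * f x' i.1 := mul_le_mul_of_nonneg_left (hwx' i) hb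
    have : (a • v + b • w) i = a * v i + b * w i := rfl
    rw [this]
    linarith
  have hOconv : Convex ℝ O := by
    refine convex_iInter fun i => ?_
    exact (convex_Ioi c).linear_preimage (LinearMap.proj (R := ℝ) (φ := fun _ : ι => ℝ) i)
  have hOopen : IsOpen O :=
    isOpen_iInter_of_finite fun i => (isOpen_Ioi).preimage (continuous_apply i)
  have hdisj : Disjoint O S := by
    rw [Set.disjoint_left]
    rintro v hvO ⟨x, hx, hvx⟩
    obtain ⟨y, hy, hlt⟩ := hcon x hx
    have h1 : c < v ⟨y, hy⟩ := (hOmem v).1 hvO ⟨y, hy⟩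
    exact absurd (h1.trans_le (hvx ⟨y, hy⟩)) (not_lt.2 hlt.le)
  obtain ⟨φ, t, hφO, hφS⟩ := geometric_hahn_banach_open hOconv hOopen hSconv hdisj
  obtain ⟨x₀, hx₀⟩ := hne₁
  set v₀ : ι → ℝ := fun i => f x₀ i.1 with hv₀
  have hv₀S : v₀ ∈ S := ⟨x₀, hx₀, fun i => le_refl _⟩
  set p : ι → ℝ := fun i => -φ (Pi.single i 1) with hp
  have hp0 : ∀ i, 0 ≤ p i := by
    intro i
    by_contra hneg
    push_neg at hneg
    have hpos : 0 < φ (Pi.single i 1) := by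
      have : -φ (Pi.single i 1) < 0 := hneg
      linarith
    have htv₀ : t ≤ φ v₀ := hφS v₀ hv₀S
    set e : ι → ℝ := Pi.single i 1 with he
    set s := (φ v₀ - t) / φ e + 1 with hsdef
    have hs0 : 0 ≤ s := by
      have h1 : 0 ≤ (φ v₀ - t) / φ e := div_nonneg (by linarith) hpos.le
      rw [hsdef]
      linarith
    have hmem : v₀ - s • e ∈ S := by
      refine ⟨x₀, hx₀, fun j => ?_⟩
      have hnn : 0 ≤ (s • e) j := by
        have h : e j = if j = i then 1 else 0 := Pi.single_apply i 1 j
        have h2 : (s • e) j = s * e j := rfl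
        rw [h2, h]
        split_ifs <;> simp [hs0]
      have hrw : (v₀ - s • e) j = v₀ j - (s • e) j := rfl
      rw [hrw]
      linarith
    have h2 := hφS _ hmem
    rw [map_sub, map_smul, smul_eq_mul] at h2
    have h3 : s * φ e = (φ v₀ - t) + φ e := by
      rw [hsdef]
      field_simp
    linarith
  have hφeq : ∀ v : ι → ℝ, φ v = -∑ i : ι, p i * v i := by
    intro v
    have hv : v = ∑ i : ι, v i • (Pi.single i (1 : ℝ) : ι → ℝ) := by
      have h0 : ∑ i : ι, v i • (Pi.single i (1 : ℝ) : ι → ℝ) = v := by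
        calc ∑ i : ι, v i • (Pi.single i (1 : ℝ) : ι → ℝ)
            = ∑ i : ι, (Pi.single i (v i) : ι → ℝ) :=
              Finset.sum_congr rfl fun i _ => by
                rw [← Pi.single_smul, smul_eq_mul, mul_one]
          _ = v := Finset.univ_sum_single v
      exact h0.symm
    conv_lhs => rw [hv]
    rw [map_sum]
    have : ∀ i : ι, φ (v i • (Pi.single i (1:ℝ) : ι → ℝ)) = -(p i * v i) := by
      intro i
      rw [map_smul, smul_eq_mul, hp]
      ring
    rw [Finset.sum_congr rfl fun i _ => this i]
    rw [Finset.sum_neg_distrib]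
  have hsum0 : 0 ≤ ∑ i : ι, p i := Finset.sum_nonneg fun i _ => hp0 i
  have hsumpos : 0 < ∑ i : ι, p i := by
    rcases hsum0.lt_or_eq with h | h
    · exact h
    exfalso
    have hall : ∀ i ∈ Finset.univ, p i = 0 :=
      (Finset.sum_eq_zero_iff_of_nonneg (fun i _ => hp0 i)).1 h.symm
    have hzero : ∀ v : ι → ℝ, φ v = 0 := by
      intro v
      rw [hφeq]
      rw [Finset.sum_eq_zero fun i hi => by rw [hall i hi]; ring]
      ring
    have h1 : φ (fun _ => c + 1) < t := hφO _ ((hOmem _).2 fun i => by norm_num)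
    have h2 : t ≤ φ v₀ := hφS v₀ hv₀S
    rw [hzero] at h1
    rw [hzero] at h2
    linarith
  have hOc : -(∑ i : ι, p i) * c ≤ t := by
    by_contra h'
    push_neg at h'
    set ε := (-(∑ i : ι, p i) * c - t) / (∑ i : ι, p i) with hε
    have hεpos : 0 < ε := div_pos (by linarith) hsumpos
    have h1 : φ (fun _ => c + ε) < t := hφO _ ((hOmem _).2 fun i => by linarith)
    rw [hφeq] at h1
    have h2 : ∑ i : ι, p i * ((fun _ : ι => c + ε) i) = (∑ i : ι, p i) * (c + ε) := by
      rw [Finset.sum_mul]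
    rw [h2] at h1
    have h3 : (∑ i : ι, p i) * ε = -(∑ i : ι, p i) * c - t := by
      rw [hε]
      field_simp
    nlinarith
  have hkey : ∀ x ∈ Ω₁, ∑ i : ι, p i * f x i.1 ≤ (∑ i : ι, p i) * c := by
    intro x hx
    have h1 : t ≤ φ (fun i => f x i.1) := hφS _ ⟨x, hx, fun i => le_refl _⟩
    rw [hφeq] at h1
    have := hOc
    nlinarith
  set w : ι → ℝ := fun i => p i / ∑ j : ι, p j with hw
  have hw0 : ∀ i, 0 ≤ w i := fun i => div_nonneg (hp0 i) hsum0
  have hwsum : ∑ i : ι, w i = 1 := by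
    rw [hw, ← Finset.sum_div]
    exact div_self hsumpos.ne'
  set z := ∑ i : ι, w i • (i.1 : X₂) with hz
  have hzΩ : z ∈ Ω₂ := hcv₂.sum_mem (fun i _ => hw0 i) hwsum (fun i _ => hu i.2)
  obtain ⟨x, hx, hcx⟩ := hsup z hzΩ
  have hjen : f x z ≤ ∑ i : ι, w i * f x i.1 := by
    have h := (hconv x hx).map_sum_le (fun i _ => hw0 i) hwsum (fun i _ => hu i.2)
    simpa [smul_eq_mul] using h
  have hwc : ∑ i : ι, w i * f x i.1 ≤ c := by
    have h1 := hkey x hx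
    have h2 : ∑ i : ι, w i * f x i.1 = (∑ i : ι, p i * f x i.1) / (∑ j : ι, p j) := by
      rw [Finset.sum_div]
      exact Finset.sum_congr rfl fun i _ => div_mul_eq_mul_div _ _ _
    rw [h2, div_le_iff₀ hsumpos]
    nlinarith
  linarith

/-- Minimax equality without continuity: if `f(·, y)` is concave and upper
semicontinuous on the nonempty compact convex set `Ω₁` for each `y ∈ Ω₂` and `f(x, ·)`
is convex and lower semicontinuous on the nonempty compact convex set `Ω₂` for each
`x ∈ Ω₁`, then `max_{x ∈ Ω₁} min_{y ∈ Ω₂} f(x,y) = min_{y ∈ Ω₂} max_{x ∈ Ω₁} f(x,y)`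
with all maxima and minima attained, and `f` admits a saddle point on `Ω₁ × Ω₂`. -/
theorem minimax_equality_and_saddle_point
    {X₁ X₂ : Type*}
    [AddCommGroup X₁] [Module ℝ X₁] [TopologicalSpace X₁] [IsTopologicalAddGroup X₁]
    [ContinuousSMul ℝ X₁] [LocallyConvexSpace ℝ X₁] [T2Space X₁]
    [AddCommGroup X₂] [Module ℝ X₂] [TopologicalSpace X₂] [IsTopologicalAddGroup X₂]
    [ContinuousSMul ℝ X₂] [LocallyConvexSpace ℝ X₂] [T2Space X₂]
    (Ω₁ : Set X₁) (Ω₂ : Set X₂)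
    (hne₁ : Ω₁.Nonempty) (hcp₁ : IsCompact Ω₁) (hcv₁ : Convex ℝ Ω₁)
    (hne₂ : Ω₂.Nonempty) (hcp₂ : IsCompact Ω₂) (hcv₂ : Convex ℝ Ω₂)
    (f : X₁ → X₂ → ℝ)
    (hconc : ∀ y ∈ Ω₂, ConcaveOn ℝ Ω₁ (fun x => f x y))
    (husc : ∀ y ∈ Ω₂, UpperSemicontinuousOn (fun x => f x y) Ω₁)
    (hconv : ∀ x ∈ Ω₁, ConvexOn ℝ Ω₂ (fun y => f x y))
    (hlsc : ∀ x ∈ Ω₁, LowerSemicontinuousOn (fun y => f x y) Ω₂) :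
    -- the inner minima and maxima are attained
    (∀ x ∈ Ω₁, ∃ y ∈ Ω₂, IsLeast ((fun y => f x y) '' Ω₂) (f x y)) ∧
    (∀ y ∈ Ω₂, ∃ x ∈ Ω₁, IsGreatest ((fun x => f x y) '' Ω₁) (f x y)) ∧
    -- the outer max and min are attained and equal
    (∃ c : ℝ,
      IsGreatest ((fun x => sInf ((fun y => f x y) '' Ω₂)) '' Ω₁) c ∧
      IsLeast ((fun y => sSup ((fun x => f x y) '' Ω₁)) '' Ω₂) c) ∧
    -- existence of a saddle point
    ∃ xbar ∈ Ω₁, ∃ ybar ∈ Ω₂,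
      (∀ x ∈ Ω₁, f x ybar ≤ f xbar ybar) ∧ (∀ y ∈ Ω₂, f xbar ybar ≤ f xbar y) := by
  classical
  have hcl₁ : IsClosed Ω₁ := hcp₁.isClosed
  have hcl₂ : IsClosed Ω₂ := hcp₂.isClosed
  set A : X₁ → ℝ := fun x => sInf ((fun y => f x y) '' Ω₂) with hA
  set B : X₂ → ℝ := fun y => sSup ((fun x => f x y) '' Ω₁) with hB
  have hmin : ∀ x ∈ Ω₁, ∃ y ∈ Ω₂, IsLeast ((fun y => f x y) '' Ω₂) (f x y) := by
    intro x hx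
    obtain ⟨y, hy, hm⟩ := exists_min_of_lsc hcp₂ hcl₂ hne₂ (hlsc x hx)
    exact ⟨y, hy, ⟨y, hy, rfl⟩, by rintro a ⟨y', hy', rfl⟩; exact hm y' hy'⟩
  have hmax : ∀ y ∈ Ω₂, ∃ x ∈ Ω₁, IsGreatest ((fun x => f x y) '' Ω₁) (f x y) := by
    intro y hy
    obtain ⟨x, hx, hm⟩ := exists_max_of_usc hcp₁ hcl₁ hne₁ (husc y hy)
    exact ⟨x, hx, ⟨x, hx, rfl⟩, by rintro a ⟨x', hx', rfl⟩; exact hm x' hx'⟩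
  have hAle : ∀ x ∈ Ω₁, ∀ y ∈ Ω₂, A x ≤ f x y := by
    intro x hx y hy
    obtain ⟨y', hy', hl⟩ := hmin x hx
    calc A x = f x y' := hl.csInf_eq
      _ ≤ f x y := hl.2 ⟨y, hy, rfl⟩
  have hBge : ∀ y ∈ Ω₂, ∀ x ∈ Ω₁, f x y ≤ B y := by
    intro y hy x hx
    obtain ⟨x', hx', hg⟩ := hmax y hy
    calc f x y ≤ f x' y := hg.2 ⟨x, hx, rfl⟩
      _ = B y := hg.csSup_eq.symm
  have hABle : ∀ x ∈ Ω₁, ∀ y ∈ Ω₂, A x ≤ B y :=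
    fun x hx y hy => (hAle x hx y hy).trans (hBge y hy x hx)
  set β := sInf (B '' Ω₂) with hβ
  have hBim_ne : (B '' Ω₂).Nonempty := hne₂.image B
  have hBim_bdd : BddBelow (B '' Ω₂) :=
    ⟨A hne₁.choose, by rintro b ⟨y, hy, rfl⟩; exact hABle _ hne₁.choose_spec y hy⟩
  have hβleB : ∀ y ∈ Ω₂, β ≤ B y := fun y hy => csInf_le hBim_bdd ⟨y, hy, rfl⟩
  have hAleβ : ∀ x ∈ Ω₁, A x ≤ β := fun x hx =>
    le_csInf hBim_ne (by rintro b ⟨y, hy, rfl⟩; exact hABle x hx y hy)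
  have hkey : ∀ c : ℝ, c < β → ∀ u : Finset X₂, ↑u ⊆ Ω₂ →
      ∃ x ∈ Ω₁, ∀ y ∈ u, c ≤ f x y := by
    intro c hc u hu
    refine key_finite hne₁ hcv₁ hcv₂ hconc hconv u hu ?_
    intro z hz
    obtain ⟨x, hx, hg⟩ := hmax z hz
    refine ⟨x, hx, ?_⟩
    have h1 : β ≤ B z := hβleB z hz
    have h2 : B z = f x z := hg.csSup_eq
    linarith
  obtain ⟨xbar, hxbarΩ, hxbar⟩ : ∃ x ∈ Ω₁, ∀ y ∈ Ω₂, β ≤ f x y := by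
    set T : Ω₂ × {c : ℝ // c < β} → Set X₁ :=
      fun i => {x | x ∈ Ω₁ ∧ i.2.1 ≤ f x i.1.1} with hT
    have hTcl : ∀ i, IsClosed (T i) := fun i =>
      usc_superlevel_closed hcl₁ (husc i.1.1 i.1.2) _
    have hfin : ∀ u : Finset (Ω₂ × {c : ℝ // c < β}), (Ω₁ ∩ ⋂ i ∈ u, T i).Nonempty := by
      intro u
      rcases u.eq_empty_or_nonempty with rfl | hune
      · simpa using hne₁
      · set c₀ := (u.image (fun i => i.2.1)).max' (hune.image _) with hc₀
        have hc₀lt : c₀ < β := by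
          obtain ⟨i, hi, hieq⟩ := Finset.mem_image.1
            ((u.image (fun i => i.2.1)).max'_mem (hune.image (fun i => i.2.1)))
          rw [hc₀, ← hieq]
          exact i.2.2
        obtain ⟨x, hx, hxall⟩ := hkey c₀ hc₀lt (u.image (fun i => (i.1.1 : X₂)))
          (by
            intro y hy
            rw [Finset.coe_image] at hy
            obtain ⟨i, _, rfl⟩ := hy
            exact i.1.2)
        refine ⟨x, hx, ?_⟩
        simp only [Set.mem_iInter]
        intro i hi
        have h1 : i.2.1 ≤ c₀ :=
          Finset.le_max' (u.image (fun i => i.2.1)) _ (Finset.mem_image_of_mem (fun i => i.2.1) hi)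
        have h2 : c₀ ≤ f x i.1.1 := hxall _ (Finset.mem_image_of_mem _ hi)
        exact ⟨hx, by linarith⟩
    obtain ⟨x, hx⟩ := hcp₁.inter_iInter_nonempty T hTcl hfin
    simp only [Set.mem_inter_iff, Set.mem_iInter] at hx
    refine ⟨x, hx.1, fun y hy => ?_⟩
    by_contra hlt
    push_neg at hlt
    have h := hx.2 ⟨⟨y, hy⟩, ⟨(f x y + β) / 2, by linarith⟩⟩
    have h2 := h.2
    simp only at h2
    linarith
  obtain ⟨ybar, hybarΩ, hybar⟩ : ∃ y ∈ Ω₂, ∀ x ∈ Ω₁, f x y ≤ β := by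
    haveI : Nonempty {c : ℝ // β < c} := ⟨⟨β + 1, by linarith⟩⟩
    set D : {c : ℝ // β < c} → Set X₂ :=
      fun c => {y | y ∈ Ω₂ ∧ ∀ x ∈ Ω₁, f x y ≤ c.1} with hD
    have hDcl : ∀ c, IsClosed (D c) := by
      intro c
      have heq : D c = ⋂ x ∈ Ω₁, {y | y ∈ Ω₂ ∧ f x y ≤ c.1} := by
        ext y
        simp only [hD, Set.mem_setOf_eq, Set.mem_iInter]
        constructor
        · rintro ⟨h1, h2⟩ x hx; exact ⟨h1, h2 x hx⟩
        · intro h; exact ⟨(h hne₁.choose hne₁.choose_spec).1, fun x hx => (h x hx).2⟩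
      rw [heq]
      exact isClosed_biInter fun x hx => lsc_sublevel_closed hcl₂ (hlsc x hx) _
    have hDcp : ∀ c, IsCompact (D c) := fun c =>
      hcp₂.of_isClosed_subset (hDcl c) (fun y hy => hy.1)
    have hDne : ∀ c, (D c).Nonempty := by
      intro c
      obtain ⟨b, ⟨y, hy, rfl⟩, hblt⟩ := exists_lt_of_csInf_lt hBim_ne c.2
      refine ⟨y, hy, fun x hx => ?_⟩
      have := hBge y hy x hx
      linarith
    have hDdir : Directed (· ⊇ ·) D := by
      intro c₁ c₂
      rcases le_total c₁.1 c₂.1 with h | h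
      · exact ⟨c₁, fun y hy => hy, fun y hy => ⟨hy.1, fun x hx => (hy.2 x hx).trans h⟩⟩
      · exact ⟨c₂, fun y hy => ⟨hy.1, fun x hx => (hy.2 x hx).trans h⟩, fun y hy => hy⟩
    obtain ⟨y, hy⟩ :=
      IsCompact.nonempty_iInter_of_directed_nonempty_isCompact_isClosed D hDdir hDne hDcp hDcl
    simp only [Set.mem_iInter] at hy
    refine ⟨y, (hy ⟨β + 1, by linarith⟩).1, fun x hx => ?_⟩
    by_contra hlt
    push_neg at hlt
    have h := (hy ⟨(β + f x y) / 2, by linarith⟩).2 x hx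
    simp only at h
    linarith
  have hAxbar : A xbar = β := by
    refine le_antisymm (hAleβ xbar hxbarΩ) ?_
    obtain ⟨y', hy', hl⟩ := hmin xbar hxbarΩ
    calc β ≤ f xbar y' := hxbar y' hy'
      _ = A xbar := hl.csInf_eq.symm
  have hBybar : B ybar = β := by
    refine le_antisymm ?_ (hβleB ybar hybarΩ)
    exact csSup_le (hne₁.image _) (by rintro b ⟨x, hx, rfl⟩; exact hybar x hx)
  refine ⟨hmin, hmax, ⟨β, ⟨⟨xbar, hxbarΩ, hAxbar⟩,
      by rintro a ⟨x, hx, rfl⟩; exact hAleβ x hx⟩,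
      ⟨⟨ybar, hybarΩ, hBybar⟩, by rintro b ⟨y, hy, rfl⟩; exact hβleB y hy⟩⟩,
    xbar, hxbarΩ, ybar, hybarΩ, ?_, ?_⟩
  · intro x hx
    have h1 : f x ybar ≤ B ybar := hBge ybar hybarΩ x hx
    have h2 : β ≤ f xbar ybar := hxbar ybar hybarΩ
    linarith
  · intro y hy
    have h1 : f xbar ybar ≤ β := hybar xbar hxbarΩ
    have h2 : β ≤ f xbar y := hxbar y hy
    linarith
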